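/- arXiv:1403.2175 — 4 statements merged into one kernel-verified Lean document; each statement's English description precedes it below -/
import Mathlib

section
/- Let p be a prime, m a positive integer, and X, t formal variables (or elements of a field where the series converge). Then the sum over reduced upper-triangular m×m matrices W with entries in Z_p (equivalently, over representatives of GL_m(Z_p)\M_m(Z_p)^× ) of (tXp^{-m})^{ord_p(det W)} equals ∏_{i=1}^{m} (1 - tX p^{i-1-m})^{-1}. -/
/-- A reduced matrix over `ℤ_p`: upper triangular, diagonal entries powers of `p`,
and the entry in position `(i,j)` (for `i < j`) a natural number `< p^(e j)`. -/
def IsReducedMat {p : ℕ} [Fact p.Prime] {m : ℕ}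
    (W : Matrix (Fin m) (Fin m) ℤ_[p]) : Prop :=
  ∃ e : Fin m → ℕ,
    (∀ i, W i i = (p : ℤ_[p]) ^ e i) ∧
    (∀ i j : Fin m, (j : ℕ) < (i : ℕ) → W i j = 0) ∧
    (∀ i j : Fin m, (i : ℕ) < (j : ℕ) → ∃ d : ℕ, d < p ^ e j ∧ W i j = (d : ℤ_[p]))

private lemma geomAux {K : Type*} [CommRing K] (r : K) :
    (PowerSeries.mk fun n => r ^ n) * (1 - PowerSeries.C (R := K) r * PowerSeries.X) = 1 := by
  have h : (PowerSeries.mk fun n => r ^ n) * (PowerSeries.C (R := K) r * PowerSeries.X)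
      = (PowerSeries.C (R := K) r * PowerSeries.mk fun n => r ^ n) * PowerSeries.X := by ring
  ext n
  rw [mul_sub, mul_one, map_sub, h]
  cases n with
  | zero => simp
  | succ k =>
      simp [PowerSeries.coeff_succ_mul_X, PowerSeries.coeff_mk, PowerSeries.coeff_one,
        pow_succ, mul_comm]

private lemma pvalAux {p : ℕ} [hp : Fact p.Prime] (k : ℕ) :
    ((p : ℤ_[p]) ^ k).valuation = (k : ℤ) := by
  simpa using PadicInt.valuation_p_pow_mul k (1 : ℤ_[p]) one_ne_zero

/-- The matrix built from diagonal exponents and above-diagonal digits. -/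
private noncomputable def redMat (p : ℕ) [Fact p.Prime] {m : ℕ} (e : Fin m → ℕ)
    (d : ∀ j : Fin m, Fin (j : ℕ) → Fin (p ^ e j)) :
    Matrix (Fin m) (Fin m) ℤ_[p] := fun i j =>
  if h : (i : ℕ) < (j : ℕ) then ((d j ⟨i, h⟩ : ℕ) : ℤ_[p])
  else if i = j then (p : ℤ_[p]) ^ e i else 0

private lemma redMat_low {p : ℕ} [Fact p.Prime] {m : ℕ} (e : Fin m → ℕ)
    (d : ∀ j : Fin m, Fin (j : ℕ) → Fin (p ^ e j)) {i j : Fin m}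
    (h : (j : ℕ) < (i : ℕ)) : redMat p e d i j = 0 := by
  have h1 : ¬ (i : ℕ) < (j : ℕ) := by omega
  have h2 : i ≠ j := by intro hc; subst hc; omega
  simp [redMat, h1, h2]

private lemma redMat_diag {p : ℕ} [Fact p.Prime] {m : ℕ} (e : Fin m → ℕ)
    (d : ∀ j : Fin m, Fin (j : ℕ) → Fin (p ^ e j)) (i : Fin m) :
    redMat p e d i i = (p : ℤ_[p]) ^ e i := by
  simp [redMat]

private lemma redMat_det {p : ℕ} [Fact p.Prime] {m : ℕ} (e : Fin m → ℕ)
    (d : ∀ j : Fin m, Fin (j : ℕ) → Fin (p ^ e j)) :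
    (redMat p e d).det = (p : ℤ_[p]) ^ (∑ i, e i) := by
  rw [Matrix.det_of_upperTriangular (fun i j hij => redMat_low e d hij)]
  rw [Finset.prod_congr rfl fun i _ => redMat_diag e d i, Finset.prod_pow_eq_pow_sum]

private lemma count_eq (p : ℕ) [hp : Fact p.Prime] (m n : ℕ) :
    Nat.card {W : Matrix (Fin m) (Fin m) ℤ_[p] //
        IsReducedMat W ∧ (W.det).valuation = (n : ℤ)}
      = ∑ l ∈ Finset.finsuppAntidiag (Finset.univ : Finset (Fin m)) n,
          ∏ j : Fin m, p ^ ((l j) * (j : ℕ)) := by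
  classical
  set F := Finset.finsuppAntidiag (Finset.univ : Finset (Fin m)) n with hF
  -- the encoding type
  let T := Σ l : {l : Fin m →₀ ℕ // l ∈ F}, ∀ j : Fin m, Fin (j : ℕ) → Fin (p ^ (l.1 j))
  have hsumF : ∀ l : Fin m →₀ ℕ, l ∈ F → ∑ j, l j = n := by
    intro l hl
    rw [hF, Finset.mem_finsuppAntidiag] at hl
    exact hl.1
  let f : T → {W : Matrix (Fin m) (Fin m) ℤ_[p] //
      IsReducedMat W ∧ (W.det).valuation = (n : ℤ)} := fun x =>
    ⟨redMat p (fun j => x.1.1 j) x.2, by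
      refine ⟨⟨fun j => x.1.1 j, fun i => redMat_diag _ _ i,
        fun i j h => redMat_low _ _ h, fun i j h => ⟨x.2 j ⟨i, h⟩, (x.2 j ⟨i, h⟩).2, ?_⟩⟩, ?_⟩
      · simp [redMat, h]
      · rw [redMat_det, pvalAux, hsumF x.1.1 x.1.2]⟩
  have hbij : Function.Bijective f := by
    constructor
    · rintro ⟨⟨l, hl⟩, d⟩ ⟨⟨l', hl'⟩, d'⟩ hEq
      have hM : redMat p (fun j => l j) d = redMat p (fun j => l' j) d' :=
        congrArg Subtype.val hEq
      have hll' : l = l' := by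
        ext j
        have h1 := congrFun (congrFun hM j) j
        rw [redMat_diag, redMat_diag] at h1
        have h2 := congrArg (fun x : ℤ_[p] => ((PadicInt.valuation x : ℕ) : ℤ)) h1
        simp only [pvalAux] at h2
        exact_mod_cast h2
      subst hll'
      have hpl : hl = hl' := rfl
      subst hpl
      suffices hd : d = d' by rw [hd]
      funext j k
      have hk : (k : ℕ) < (j : ℕ) := k.isLt
      have h1 := congrFun (congrFun hM ⟨k, lt_trans k.isLt j.isLt⟩) j
      simp only [redMat, dif_pos hk] at h1
      ext
      exact_mod_cast h1
    · rintro ⟨W, ⟨⟨e, hdiag, hlow, hup⟩, hval⟩⟩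
      have hdet : W.det = (p : ℤ_[p]) ^ (∑ i, e i) := by
        rw [Matrix.det_of_upperTriangular (fun i j hij => hlow i j hij)]
        rw [Finset.prod_congr rfl fun i _ => hdiag i, Finset.prod_pow_eq_pow_sum]
      have hsum : ∑ i, e i = n := by
        have h2 := hval
        rw [hdet, pvalAux] at h2
        exact_mod_cast h2
      set l : Fin m →₀ ℕ := Finsupp.equivFunOnFinite.symm e with hldef
      have hleq : ∀ j, l j = e j := fun j => rfl
      have hlF : l ∈ F := by
        rw [hF, Finset.mem_finsuppAntidiag]
        exact ⟨by simpa [hleq] using hsum, fun _ _ => Finset.mem_univ _⟩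
      refine ⟨⟨⟨l, hlF⟩, fun j k =>
        ⟨(hup ⟨k, lt_trans k.isLt j.isLt⟩ j k.isLt).choose, by
          simpa [hleq] using (hup ⟨k, lt_trans k.isLt j.isLt⟩ j k.isLt).choose_spec.1⟩⟩, ?_⟩
      apply Subtype.ext
      funext i j
      show redMat p (fun j => l j) _ i j = W i j
      by_cases h : (i : ℕ) < (j : ℕ)
      · simp only [redMat, dif_pos h]
        exact ((hup i j h).choose_spec.2).symm
      · by_cases hij : i = j
        · subst hij
          rw [redMat_diag, hdiag, hleq]
        · have hji : (j : ℕ) < (i : ℕ) := by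
            rcases lt_or_eq_of_le (not_lt.mp h) with h' | h'
            · exact h'
            · exact absurd (Fin.ext h'.symm) hij
          rw [redMat_low _ _ hji, hlow i j hji]
  rw [← Nat.card_eq_of_bijective f hbij]
  rw [Nat.card_eq_fintype_card, Fintype.card_sigma,
    ← Finset.sum_coe_sort F (fun l => ∏ j : Fin m, p ^ ((l j) * (j : ℕ)))]
  refine Finset.sum_congr rfl fun l _ => ?_
  rw [Fintype.card_pi]
  refine Finset.prod_congr rfl fun j _ => ?_
  rw [Fintype.card_fun, Fintype.card_fin, Fintype.card_fin, ← pow_mul]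

private lemma zpowSumAux {K : Type*} [Field K] {u : K} (hu : u ≠ 0) {ι : Type*}
    (s : Finset ι) (f : ι → ℤ) : ∏ j ∈ s, u ^ f j = u ^ (∑ j ∈ s, f j) := by
  classical
  induction s using Finset.induction with
  | empty => simp
  | insert a s h ih => rw [Finset.prod_insert h, Finset.sum_insert h, zpow_add₀ hu, ih]

/-- The formal power series identity
`∑_W (t X p^{-m})^{ord_p (det W)} = ∏_{i=1}^m (1 - t X p^{i-1-m})^{-1}`,
where `W` runs over reduced `m × m` matrices over `ℤ_p` (a complete set of
representatives of `GL_m(ℤ_p)\M_m(ℤ_p)^×`), stated as a power series in `t`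
over the rational function field `ℚ(X)`: the coefficient of `t^n` on the left
is `(#{reduced W : ord_p(det W) = n}) · (X p^{-m})^n`. -/
theorem stmt3 (p : ℕ) [Fact p.Prime] (m : ℕ) (hm : 1 ≤ m) :
    (PowerSeries.mk fun n : ℕ =>
        (Nat.card {W : Matrix (Fin m) (Fin m) ℤ_[p] //
            IsReducedMat W ∧ (W.det).valuation = (n : ℤ)} : RatFunc ℚ) *
          (RatFunc.X * (p : RatFunc ℚ) ^ (-(m : ℤ))) ^ n) *
      ∏ i ∈ Finset.Icc 1 m,
        (1 - PowerSeries.C (R := RatFunc ℚ)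
              (RatFunc.X * (p : RatFunc ℚ) ^ ((i : ℤ) - 1 - m)) * PowerSeries.X) = 1 := by
  classical
  have hp : Fact p.Prime := inferInstance
  have hu : (p : RatFunc ℚ) ≠ 0 := by
    rw [← map_natCast (algebraMap (Polynomial ℚ) (RatFunc ℚ))]
    simp only [ne_eq, map_eq_zero_iff _ (RatFunc.algebraMap_injective ℚ)]
    exact_mod_cast hp.out.ne_zero
  set u : RatFunc ℚ := (p : RatFunc ℚ) with hudef
  set c : ℕ → PowerSeries (RatFunc ℚ) := fun k =>
    1 - PowerSeries.C (R := RatFunc ℚ) (RatFunc.X * u ^ ((k : ℤ) - m)) * PowerSeries.X with hcdef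
  have hprod : (∏ i ∈ Finset.Icc 1 m,
        (1 - PowerSeries.C (R := RatFunc ℚ) (RatFunc.X * u ^ ((i : ℤ) - 1 - m)) * PowerSeries.X))
      = ∏ j : Fin m, c (j : ℕ) := by
    have hIcc : Finset.Icc 1 m = Finset.image (fun j => j + 1) (Finset.range m) := by
      ext x
      simp only [Finset.mem_Icc, Finset.mem_image, Finset.mem_range]
      constructor
      · intro h
        exact ⟨x - 1, by omega, by omega⟩
      · rintro ⟨j, hj, rfl⟩
        omega
    rw [hIcc, Finset.prod_image (fun a _ b _ h => by omega),
      ← Fin.prod_univ_eq_prod_range (fun j =>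
        1 - PowerSeries.C (R := RatFunc ℚ)
          (RatFunc.X * u ^ ((((j + 1) : ℕ) : ℤ) - 1 - m)) * PowerSeries.X) m]
    exact Finset.prod_congr rfl fun j _ => by rw [hcdef]; congr 2; push_cast; ring
  rw [hprod]
  have hS : (PowerSeries.mk fun n : ℕ =>
        (Nat.card {W : Matrix (Fin m) (Fin m) ℤ_[p] //
            IsReducedMat W ∧ (W.det).valuation = (n : ℤ)} : RatFunc ℚ) *
          (RatFunc.X * u ^ (-(m : ℤ))) ^ n)
      = ∏ j : Fin m, PowerSeries.mk fun n : ℕ => (RatFunc.X * u ^ (((j : ℕ) : ℤ) - m)) ^ n := by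
    ext n
    rw [PowerSeries.coeff_mk, PowerSeries.coeff_prod]
    simp only [PowerSeries.coeff_mk]
    rw [count_eq p m n, Nat.cast_sum, Finset.sum_mul]
    refine Finset.sum_congr rfl fun l hl => ?_
    have hsum : ∑ j, l j = n := by
      rw [Finset.mem_finsuppAntidiag] at hl
      exact hl.1
    have e1 : ((∏ j : Fin m, p ^ ((l j) * (j : ℕ)) : ℕ) : RatFunc ℚ)
        = u ^ ((∑ j : Fin m, (l j) * (j : ℕ) : ℕ) : ℤ) := by
      rw [zpow_natCast]
      push_cast
      rw [Finset.prod_pow_eq_pow_sum]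
    have e2 : (RatFunc.X * u ^ (-(m : ℤ))) ^ n
        = RatFunc.X ^ n * u ^ (-(m : ℤ) * n) := by
      rw [mul_pow, ← zpow_natCast (u ^ (-(m : ℤ))) n, ← zpow_mul]
    have e3 : (∏ j : Fin m, (RatFunc.X * u ^ (((j : ℕ) : ℤ) - m)) ^ (l j))
        = RatFunc.X ^ n * u ^ (∑ j : Fin m, (((j : ℕ) : ℤ) - m) * (l j : ℤ)) := by
      rw [Finset.prod_congr rfl (fun (j : Fin m) _ =>
        (by rw [mul_pow, ← zpow_natCast (u ^ (((j : ℕ) : ℤ) - m)) (l j), ← zpow_mul] :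
          (RatFunc.X * u ^ (((j : ℕ) : ℤ) - m)) ^ (l j)
            = RatFunc.X ^ (l j) * u ^ ((((j : ℕ) : ℤ) - m) * (l j : ℤ)))),
        Finset.prod_mul_distrib, Finset.prod_pow_eq_pow_sum, hsum, zpowSumAux hu]
    rw [e1, e2, e3]
    rw [show u ^ ((∑ j : Fin m, (l j) * (j : ℕ) : ℕ) : ℤ) * (RatFunc.X ^ n * u ^ (-(m : ℤ) * n))
        = RatFunc.X ^ n * u ^ (((∑ j : Fin m, (l j) * (j : ℕ) : ℕ) : ℤ) + (-(m : ℤ) * n)) by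
      rw [zpow_add₀ hu]; ring]
    congr 1
    have hn : (n : ℤ) = ∑ j : Fin m, (l j : ℤ) := by exact_mod_cast hsum.symm
    rw [hn]
    push_cast
    rw [Finset.mul_sum, ← Finset.sum_add_distrib]
    congr 1
    refine Finset.sum_congr rfl fun j _ => ?_
    ring
  rw [hS]
  have hone : ∀ j : Fin m,
      (PowerSeries.mk fun n : ℕ => (RatFunc.X * u ^ (((j : ℕ) : ℤ) - m)) ^ n) * c (j : ℕ) = 1 :=
    fun j => geomAux _
  calc (∏ j : Fin m, PowerSeries.mk fun n : ℕ => (RatFunc.X * u ^ (((j : ℕ) : ℤ) - m)) ^ n)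
        * ∏ j : Fin m, c (j : ℕ)
      = ∏ j : Fin m, ((PowerSeries.mk fun n : ℕ =>
          (RatFunc.X * u ^ (((j : ℕ) : ℤ) - m)) ^ n) * c (j : ℕ)) := Finset.prod_mul_distrib.symm
    _ = ∏ _j : Fin m, (1 : PowerSeries (RatFunc ℚ)) := Finset.prod_congr rfl fun j _ => hone j
    _ = 1 := Finset.prod_const_one
end

section
/- Let K_p = Q_p ⊕ Q_p (the split case) with O_p = Z_p ⊕ Z_p, and let l ≥ m ≥ 1. Then the local density α_p(1_l, 1_m) equals ∏_{i=0}^{m-1} (1 − p^{−l+i}). -/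
open Matrix Filter

section General
variable {R : Type} [CommRing R] {l m : ℕ}

def Sol (R : Type) [CommRing R] (l m : ℕ) : Type :=
  {XY : Matrix (Fin l) (Fin m) R × Matrix (Fin l) (Fin m) R // XY.2ᵀ * XY.1 = 1}

def Fib (x y : Fin (l + 1) → R) (m : ℕ) : Type :=
  {XY : Matrix (Fin (l + 1)) (Fin m) R × Matrix (Fin (l + 1)) (Fin m) R //
    y ᵥ* XY.1 = 0 ∧ x ᵥ* XY.2 = 0 ∧ XY.2ᵀ * XY.1 = 1}

def Base (R : Type) [CommRing R] (L : ℕ) : Type :=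
  {xy : (Fin L → R) × (Fin L → R) // xy.2 ⬝ᵥ xy.1 = 1}

def peel : Matrix (Fin (l + 1)) (Fin (m + 1)) R ≃
    (Fin (l + 1) → R) × Matrix (Fin (l + 1)) (Fin m) R where
  toFun X := (fun i => X i 0, Matrix.of fun i => Fin.tail (X i))
  invFun q := Matrix.of fun i => Fin.cons (q.1 i) (q.2 i)
  left_inv X := by
    ext i j
    exact congrFun (Fin.cons_self_tail (X i)) j
  right_inv q := by
    refine Prod.ext (funext fun i => ?_) (by ext i j; simp [Fin.tail])
    simp

lemma cond_iff (x y : Fin (l + 1) → R) (X' Y' : Matrix (Fin (l + 1)) (Fin m) R) :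
    (Matrix.of fun i => Fin.cons (y i) (Y' i))ᵀ * (Matrix.of fun i => Fin.cons (x i) (X' i)) = 1 ↔
      (y ⬝ᵥ x = 1 ∧ y ᵥ* X' = 0 ∧ x ᵥ* Y' = 0 ∧ Y'ᵀ * X' = 1) := by
  have hent : ∀ c d, ((Matrix.of fun i => Fin.cons (y i) (Y' i))ᵀ *
      (Matrix.of fun i => Fin.cons (x i) (X' i))) c d =
      ∑ i, (Fin.cons (y i) (Y' i) : Fin (m+1) → R) c * (Fin.cons (x i) (X' i) : Fin (m+1) → R) d := by
    intro c d; simp [Matrix.mul_apply]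
  constructor
  · intro h
    have hcd : ∀ c d : Fin (m + 1), (∑ i, (Fin.cons (y i) (Y' i) : Fin (m+1) → R) c * (Fin.cons (x i) (X' i) : Fin (m+1) → R) d) =
        (1 : Matrix (Fin (m + 1)) (Fin (m + 1)) R) c d :=
      fun c d => (hent c d).symm.trans (congrFun (congrFun h c) d)
    refine ⟨?_, funext fun k => ?_, funext fun k => ?_, Matrix.ext fun c k => ?_⟩
    · have := hcd 0 0
      simpa [dotProduct, Matrix.one_apply] using this
    · have := hcd 0 k.succ
      simpa [Matrix.vecMul, dotProduct, Matrix.one_apply, (Fin.succ_ne_zero k).symm] using this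
    · have := hcd k.succ 0
      simpa [Matrix.vecMul, dotProduct, Matrix.one_apply, Fin.succ_ne_zero k, mul_comm] using this
    · have := hcd c.succ k.succ
      simpa [Matrix.mul_apply, Matrix.one_apply, Fin.succ_inj] using this
  · rintro ⟨h1, h2, h3, h4⟩
    ext c d
    rw [hent]
    refine Fin.cases ?_ (fun c' => ?_) c <;> refine Fin.cases ?_ (fun d' => ?_) d
    · simpa [dotProduct, Matrix.one_apply] using h1
    · have := congrFun h2 d'
      simpa [Matrix.vecMul, dotProduct, Matrix.one_apply, (Fin.succ_ne_zero d').symm] using this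
    · have := congrFun h3 c'
      simpa [Matrix.vecMul, dotProduct, Matrix.one_apply, Fin.succ_ne_zero c', mul_comm] using this
    · have := congrFun (congrFun h4 c') d'
      simpa [Matrix.mul_apply, Matrix.one_apply, Fin.succ_inj] using this

end General

section General2
variable {R : Type} [CommRing R] {l m : ℕ}

lemma assembled (X : Matrix (Fin (l + 1)) (Fin (m + 1)) R) :
    (Matrix.of fun i => Fin.cons (X i 0) (Fin.tail (X i))) = X := by
  ext i j; exact congrFun (Fin.cons_self_tail (X i)) j

lemma hass (s : Sol R (l + 1) (m + 1)) :
    (Matrix.of fun i => Fin.cons (s.1.2 i 0) (Fin.tail (s.1.2 i)))ᵀ *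
      (Matrix.of fun i => Fin.cons (s.1.1 i 0) (Fin.tail (s.1.1 i))) = 1 := by
  rw [assembled, assembled]; exact s.2

def solEquivSigma : Sol R (l + 1) (m + 1) ≃ Σ xy : Base R (l + 1), Fib xy.1.1 xy.1.2 m where
  toFun s :=
    ⟨⟨(fun i => s.1.1 i 0, fun i => s.1.2 i 0), ((cond_iff _ _ _ _).mp (hass s)).1⟩,
     ⟨(Matrix.of fun i => Fin.tail (s.1.1 i), Matrix.of fun i => Fin.tail (s.1.2 i)),
      ((cond_iff _ _ _ _).mp (hass s)).2⟩⟩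
  invFun t :=
    ⟨(Matrix.of fun i => Fin.cons (t.1.1.1 i) (t.2.1.1 i),
      Matrix.of fun i => Fin.cons (t.1.1.2 i) (t.2.1.2 i)),
      (cond_iff _ _ _ _).mpr ⟨t.1.2, t.2.2⟩⟩
  left_inv s := Subtype.ext (Prod.ext (assembled _) (assembled _))
  right_inv t := rfl

end General2

section FibEquiv
set_option linter.unusedSectionVars false
variable {R : Type} [CommRing R] {l m : ℕ}

variable (x y : Fin (l + 1) → R) (Q P : Matrix (Fin (l + 1)) (Fin (l + 1)) R)

lemma row0_eq (hQP : Q * P = 1) (hyQ : y ᵥ* Q = Pi.single 0 1) : ∀ j, P 0 j = y j := by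
  intro j
  have h1 : (y ᵥ* Q) ᵥ* P = y := by rw [Matrix.vecMul_vecMul, hQP, Matrix.vecMul_one]
  have h2 : ((Pi.single (0 : Fin (l + 1)) (1 : R)) ᵥ* P) j = P 0 j := by
    simp [Matrix.vecMul, dotProduct, Pi.single_apply]
  rw [hyQ] at h1
  rw [← h2, h1]

lemma px_eq (hPQ : P * Q = 1) (hQx : ∀ i, Q i 0 = x i) :
    P *ᵥ x = Pi.single 0 1 := by
  have hx : Q *ᵥ Pi.single 0 1 = x := by
    funext i; rw [Matrix.mulVec_single]; simp [hQx i]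
  rw [← hx, Matrix.mulVec_mulVec, hPQ, Matrix.one_mulVec]

/-- The fiber over a base point `(x, y)` is equivalent to the solution set in
dimension `(l, m)`, given an explicit invertible change of basis. -/
def fibEquivSol (hQP : Q * P = 1) (hPQ : P * Q = 1) (hQx : ∀ i, Q i 0 = x i)
    (hyQ : y ᵥ* Q = Pi.single 0 1) : Fib x y m ≃ Sol R l m where
  toFun t :=
    ⟨((P * t.1.1).submatrix Fin.succ id, ((Qᵀ) * t.1.2).submatrix Fin.succ id), by
      obtain ⟨⟨X', Y'⟩, h1, h2, h3⟩ := t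
      have key : Y'ᵀ * X' = 1 := h3
      ext c d
      have hfull : ∑ i, (Qᵀ * Y') i c * (P * X') i d = (1 : Matrix (Fin m) (Fin m) R) c d := by
        have h5 : ((Qᵀ * Y')ᵀ * (P * X')) c d = (1 : Matrix (Fin m) (Fin m) R) c d := by
          rw [Matrix.transpose_mul, Matrix.transpose_transpose, Matrix.mul_assoc,
            ← Matrix.mul_assoc Q P, hQP, Matrix.one_mul, key]
        rw [← h5]
        simp [Matrix.mul_apply, mul_comm]
      have h0y : (Qᵀ * Y') 0 c = 0 := by
        have h6 : (Qᵀ * Y') 0 c = (x ᵥ* Y') c := by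
          simp [Matrix.mul_apply, Matrix.vecMul, dotProduct, hQx]
        rw [h6, h2]; rfl
      have h0x : (P * X') 0 d = 0 := by
        have h6 : (P * X') 0 d = (y ᵥ* X') d := by
          simp [Matrix.mul_apply, Matrix.vecMul, dotProduct, row0_eq y Q P hQP hyQ]
        rw [h6, h1]; rfl
      rw [Fin.sum_univ_succ, h0y, zero_mul, zero_add] at hfull
      rw [← hfull]
      simp [Matrix.mul_apply, mul_comm]⟩
  invFun t :=
    ⟨(Q * Matrix.of (Fin.cons 0 t.1.1), Pᵀ * Matrix.of (Fin.cons 0 t.1.2)), by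
      obtain ⟨⟨X₀, Y₀⟩, h⟩ := t
      refine ⟨?_, ?_, ?_⟩
      · rw [← Matrix.vecMul_vecMul, hyQ]
        funext j
        simp [Matrix.vecMul, dotProduct, Pi.single_apply]
        rfl
      · rw [← Matrix.vecMul_vecMul, Matrix.vecMul_transpose, px_eq x Q P hPQ hQx]
        funext j
        simp [Matrix.vecMul, dotProduct, Pi.single_apply]
        rfl
      · rw [Matrix.transpose_mul, Matrix.transpose_transpose, Matrix.mul_assoc,
          ← Matrix.mul_assoc P Q, hPQ, Matrix.one_mul]
        ext c d
        have h7 : ((Matrix.of (Fin.cons 0 Y₀))ᵀ * Matrix.of (Fin.cons 0 X₀)) c d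
            = (Y₀ᵀ * X₀) c d := by
          simp [Matrix.mul_apply, Fin.sum_univ_succ]
          show (0 : Fin m → R) c * (0 : Fin m → R) d + ∑ i, Y₀ i c * X₀ i d = _
          simp
        rw [h7, h]⟩
  left_inv t := by
    obtain ⟨⟨X', Y'⟩, h1, h2, h3⟩ := t
    refine Subtype.ext (Prod.ext ?_ ?_)
    · show Q * Matrix.of (Fin.cons 0 ((P * X').submatrix Fin.succ id)) = X'
      have hrow : Matrix.of (Fin.cons 0 ((P * X').submatrix Fin.succ id)) = P * X' := by
        ext i j
        refine Fin.cases ?_ (fun i' => ?_) i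
        · show (0 : Fin m → R) j = (P * X') 0 j
          have h6 : (P * X') 0 j = (y ᵥ* X') j := by
            simp [Matrix.mul_apply, Matrix.vecMul, dotProduct, row0_eq y Q P hQP hyQ]
          rw [h6, h1]
        · rfl
      rw [hrow, ← Matrix.mul_assoc, hQP, Matrix.one_mul]
    · show Pᵀ * Matrix.of (Fin.cons 0 ((Qᵀ * Y').submatrix Fin.succ id)) = Y'
      have hrow : Matrix.of (Fin.cons 0 ((Qᵀ * Y').submatrix Fin.succ id)) = Qᵀ * Y' := by
        ext i j
        refine Fin.cases ?_ (fun i' => ?_) i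
        · show (0 : Fin m → R) j = (Qᵀ * Y') 0 j
          have h6 : (Qᵀ * Y') 0 j = (x ᵥ* Y') j := by
            simp [Matrix.mul_apply, Matrix.vecMul, dotProduct, hQx]
          rw [h6, h2]
        · rfl
      rw [hrow, ← Matrix.mul_assoc, ← Matrix.transpose_mul, hQP, Matrix.transpose_one,
        Matrix.one_mul]
  right_inv t := by
    obtain ⟨⟨X₀, Y₀⟩, h⟩ := t
    refine Subtype.ext (Prod.ext ?_ ?_)
    · show (P * (Q * Matrix.of (Fin.cons 0 X₀))).submatrix Fin.succ id = X₀
      rw [← Matrix.mul_assoc, hPQ, Matrix.one_mul]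
      ext i j; rfl
    · show (Qᵀ * (Pᵀ * Matrix.of (Fin.cons 0 Y₀))).submatrix Fin.succ id = Y₀
      rw [← Matrix.mul_assoc, ← Matrix.transpose_mul, hPQ, Matrix.transpose_one, Matrix.one_mul]
      ext i j; rfl

end FibEquiv

section QP
variable {R : Type} [CommRing R] {l : ℕ}

lemma exists_QP_zero (x y : Fin (l + 1) → R) (hyx : y ⬝ᵥ x = 1) (hu : IsUnit (y 0)) :
    ∃ Q P : Matrix (Fin (l + 1)) (Fin (l + 1)) R,
      Q * P = 1 ∧ P * Q = 1 ∧ (∀ i, Q i 0 = x i) ∧ y ᵥ* Q = Pi.single 0 1 := by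
  classical
  set v : R := ((hu.unit⁻¹ : Rˣ) : R) with hv_def
  have hv : y 0 * v = 1 := by
    rw [hv_def]; exact hu.mul_val_inv
  have hyx' : ∑ j, y j * x j = 1 := hyx
  set Q : Matrix (Fin (l + 1)) (Fin (l + 1)) R :=
    Matrix.of fun j => Fin.cons (x j)
      (fun k => (if j = k.succ then (1 : R) else 0) - (if j = 0 then y k.succ * v else 0))
    with hQ_def
  set P : Matrix (Fin (l + 1)) (Fin (l + 1)) R :=
    Matrix.of fun r c => Fin.cases (motive := fun _ => R) (y c)
      (fun s => (if c = s.succ then (1 : R) else 0) - y c * x s.succ) r with hP_def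
  have hPQ : P * Q = 1 := by
    ext r c
    rw [Matrix.mul_apply]
    refine Fin.cases ?_ (fun s => ?_) r <;> refine Fin.cases ?_ (fun k => ?_) c
    · simpa [hQ_def, hP_def, Matrix.one_apply] using hyx'
    · have : ∀ j, P 0 j * Q j k.succ =
          y j * ((if j = k.succ then (1 : R) else 0) - (if j = 0 then y k.succ * v else 0)) :=
        fun j => rfl
      simp only [this, mul_sub, Finset.sum_sub_distrib]
      simp [Finset.sum_ite_eq', Matrix.one_apply, (Fin.succ_ne_zero k).symm]
      linear_combination (-(y k.succ)) * hv
    · have : ∀ j, P s.succ j * Q j 0 =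
          ((if j = s.succ then (1 : R) else 0) - y j * x s.succ) * x j := fun j => rfl
      simp only [this, sub_mul, Finset.sum_sub_distrib, ite_mul, one_mul, zero_mul]
      simp [Finset.sum_ite_eq', Matrix.one_apply, Fin.succ_ne_zero s]
      have h8 : ∑ j, y j * x s.succ * x j = x s.succ * ∑ j, y j * x j := by
        rw [Finset.mul_sum]; exact Finset.sum_congr rfl fun j _ => by ring
      rw [h8, hyx', mul_one, sub_self]
    · have : ∀ j, P s.succ j * Q j k.succ =
          ((if j = s.succ then (1 : R) else 0) - y j * x s.succ) *
            ((if j = k.succ then (1 : R) else 0) - (if j = 0 then y k.succ * v else 0)) :=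
        fun j => rfl
      simp only [this, sub_mul, mul_sub, Finset.sum_sub_distrib, ite_mul, mul_ite, one_mul,
        mul_one, zero_mul, mul_zero]
      simp [Finset.sum_ite_eq', Matrix.one_apply, Fin.succ_ne_zero, Fin.succ_inj]
      rw [if_neg (show ¬(0 : Fin (l + 1)) = s.succ from fun h => Fin.succ_ne_zero s h.symm)]
      have h10 : (if k = s then (1 : R) else 0) = (if s = k then 1 else 0) := by
        simp [eq_comm]
      rw [h10]
      linear_combination (x s.succ * y k.succ) * hv
  have hQP : Q * P = 1 := mul_eq_one_comm.mpr hPQ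
  have hQx : ∀ i, Q i 0 = x i := fun i => rfl
  have hyQ : y ᵥ* Q = Pi.single 0 1 := by
    funext c
    show (P * Q) 0 c = _
    rw [hPQ]
    simp [Matrix.one_apply, Pi.single_apply, eq_comm]
  exact ⟨Q, P, hQP, hPQ, hQx, hyQ⟩

end QP

section QP2
variable {R : Type} [CommRing R] {l : ℕ}

lemma exists_QP (x y : Fin (l + 1) → R) (hyx : y ⬝ᵥ x = 1) (hu : ∃ i, IsUnit (y i)) :
    ∃ Q P : Matrix (Fin (l + 1)) (Fin (l + 1)) R,
      Q * P = 1 ∧ P * Q = 1 ∧ (∀ i, Q i 0 = x i) ∧ y ᵥ* Q = Pi.single 0 1 := by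
  obtain ⟨i, hui⟩ := hu
  set τ := Equiv.swap (0 : Fin (l + 1)) i with hτ
  have hyx' : (y ∘ τ) ⬝ᵥ (x ∘ τ) = 1 := by
    rw [← hyx]
    exact Equiv.sum_comp τ fun j => y j * x j
  have hu' : IsUnit ((y ∘ τ) 0) := by
    simpa [hτ, Equiv.swap_apply_left] using hui
  obtain ⟨Q', P', hQP', hPQ', hQx', hyQ'⟩ := exists_QP_zero (x ∘ τ) (y ∘ τ) hyx' hu'
  refine ⟨Q'.submatrix τ id, P'.submatrix id τ, ?_, ?_, ?_, ?_⟩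
  · rw [show (Q'.submatrix τ id : Matrix _ _ R) = Q'.submatrix τ (Equiv.refl _) from rfl,
      show (P'.submatrix id τ : Matrix _ _ R) = P'.submatrix (Equiv.refl _) τ from rfl,
      Matrix.submatrix_mul_equiv, hQP', Matrix.submatrix_one_equiv]
  · rw [show (P'.submatrix id τ : Matrix _ _ R) = P'.submatrix id (τ : Fin (l+1) ≃ Fin (l+1)) from rfl,
      Matrix.submatrix_mul_equiv, hPQ']
    rfl
  · intro j
    show Q' (τ j) 0 = x j
    rw [hQx' (τ j)]
    show x (τ (τ j)) = x j
    rw [Equiv.swap_apply_self]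
  · funext c
    show ∑ j, y j * Q' (τ j) c = _
    have hs : ∑ j, y j * Q' (τ j) c = ∑ j, y (τ j) * Q' (τ (τ j)) c := by
      exact (Equiv.sum_comp τ fun j => y j * Q' (τ j) c).symm
    rw [hs]
    have hs2 : ∀ j, y (τ j) * Q' (τ (τ j)) c = (y ∘ τ) j * Q' j c := by
      intro j; rw [Equiv.swap_apply_self]; rfl
    rw [Finset.sum_congr rfl fun j _ => hs2 j]
    exact congrFun hyQ' c

end QP2

section ZModFacts
variable {p b : ℕ}

lemma zmod_isUnit_iff (hp : p.Prime) (z : ZMod (p ^ (b + 1))) :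
    IsUnit z ↔ ¬ p ∣ z.val := by
  haveI : NeZero (p ^ (b + 1)) := ⟨pow_ne_zero _ hp.pos.ne'⟩
  conv_lhs => rw [← ZMod.natCast_zmod_val z]
  rw [ZMod.isUnit_iff_coprime, Nat.coprime_pow_right_iff (Nat.succ_pos b),
    Nat.coprime_comm, Nat.Prime.coprime_iff_not_dvd hp]

lemma exists_unit_of_dot {L : ℕ} (hp : p.Prime) (x y : Fin L → ZMod (p ^ (b + 1)))
    (hyx : y ⬝ᵥ x = 1) : ∃ i, IsUnit (y i) := by
  haveI : NeZero (p ^ (b + 1)) := ⟨pow_ne_zero _ hp.pos.ne'⟩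
  haveI : Fact p.Prime := ⟨hp⟩
  by_contra hc
  push_neg at hc
  have hdvd : p ∣ p ^ (b + 1) := dvd_pow_self p (Nat.succ_ne_zero b)
  let φ := ZMod.castHom hdvd (ZMod p)
  have hzero : ∀ i, φ (y i) = 0 := by
    intro i
    have h1 : ¬ IsUnit (y i) := hc i
    rw [zmod_isUnit_iff hp, not_not] at h1
    have h2 : φ (y i) = φ ((y i).val : ZMod (p ^ (b + 1))) := by
      rw [ZMod.natCast_zmod_val]
    rw [h2, map_natCast, ZMod.natCast_eq_zero_iff]
    exact h1
  have h3 : φ (y ⬝ᵥ x) = 1 := by rw [hyx, _root_.map_one]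
  rw [dotProduct, map_sum] at h3
  have h4 : ∀ i ∈ Finset.univ, φ (y i * x i) = 0 := by
    intro i _
    rw [_root_.map_mul, hzero i, zero_mul]
  rw [Finset.sum_congr rfl h4, Finset.sum_const_zero] at h3
  exact zero_ne_one h3

lemma card_nonunits (hp : p.Prime) :
    Nat.card {z : ZMod (p ^ (b + 1)) // ¬ IsUnit z} = p ^ b := by
  classical
  haveI : NeZero (p ^ (b + 1)) := ⟨pow_ne_zero _ hp.pos.ne'⟩
  rw [Nat.card_eq_fintype_card]
  have e : (ZMod (p ^ (b + 1)))ˣ ≃ {z : ZMod (p ^ (b + 1)) // IsUnit z} :=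
    { toFun := fun u => ⟨(u : ZMod (p ^ (b + 1))), u.isUnit⟩
      invFun := fun z => z.prop.unit
      left_inv := fun u => Units.ext u.isUnit.unit_spec
      right_inv := fun z => Subtype.ext z.prop.unit_spec }
  have hcu : Fintype.card {z : ZMod (p ^ (b + 1)) // IsUnit z} = p ^ b * (p - 1) := by
    rw [← Fintype.card_congr e, ZMod.card_units_eq_totient,
      Nat.totient_prime_pow hp (Nat.succ_pos b)]
    simp
  rw [Fintype.card_subtype_compl, hcu, ZMod.card]
  have h5 : p ^ b * (p - 1) + p ^ b = p ^ (b + 1) := by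
    have : p - 1 + 1 = p := Nat.succ_pred_eq_of_pos hp.pos
    calc p ^ b * (p - 1) + p ^ b = p ^ b * (p - 1 + 1) := by ring
    _ = p ^ (b + 1) := by rw [this]; ring
  omega

end ZModFacts

section BaseCount
variable {p b l : ℕ}

lemma card_dot_fiber (hp : p.Prime) (y : Fin (l + 1) → ZMod (p ^ (b + 1)))
    (hy : ∃ i, IsUnit (y i)) :
    Nat.card {x : Fin (l + 1) → ZMod (p ^ (b + 1)) // y ⬝ᵥ x = 1} = (p ^ (b + 1)) ^ l := by
  haveI : NeZero (p ^ (b + 1)) := ⟨pow_ne_zero _ hp.pos.ne'⟩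
  obtain ⟨i, hui⟩ := hy
  set x₀ : Fin (l + 1) → ZMod (p ^ (b + 1)) := Pi.single i ((hui.unit⁻¹ : _ˣ) : ZMod (p ^ (b + 1)))
    with hx₀
  have hyx₀ : y ⬝ᵥ x₀ = 1 := by
    rw [hx₀]
    simp only [dotProduct, Pi.single_apply, mul_ite, mul_zero]
    rw [Finset.sum_ite_eq' Finset.univ i fun j => y j * ((hui.unit⁻¹ : _ˣ) : ZMod (p ^ (b + 1)))]
    simpa using hui.mul_val_inv
  obtain ⟨Q, P, hQP, hPQ, hQx, hyQ⟩ := exists_QP x₀ y hyx₀ ⟨i, hui⟩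
  have e1 : {x : Fin (l + 1) → ZMod (p ^ (b + 1)) // y ⬝ᵥ x = 1} ≃
      {u : Fin (l + 1) → ZMod (p ^ (b + 1)) // u 0 = 1} :=
    { toFun := fun x => ⟨P *ᵥ x.1, by
        show ∑ j, P 0 j * x.1 j = 1
        rw [Finset.sum_congr rfl fun j _ => by rw [row0_eq y Q P hQP hyQ j]]
        exact x.2⟩
      invFun := fun u => ⟨Q *ᵥ u.1, by
        show y ⬝ᵥ (Q *ᵥ u.1) = 1
        rw [Matrix.dotProduct_mulVec, hyQ]
        simpa [dotProduct, Pi.single_apply] using u.2⟩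
      left_inv := fun x => Subtype.ext (by
        show Q *ᵥ (P *ᵥ x.1) = x.1
        rw [Matrix.mulVec_mulVec, hQP, Matrix.one_mulVec])
      right_inv := fun u => Subtype.ext (by
        show P *ᵥ (Q *ᵥ u.1) = u.1
        rw [Matrix.mulVec_mulVec, hPQ, Matrix.one_mulVec]) }
  have e2 : {u : Fin (l + 1) → ZMod (p ^ (b + 1)) // u 0 = 1} ≃ (Fin l → ZMod (p ^ (b + 1))) :=
    { toFun := fun u => Fin.tail u.1
      invFun := fun t => ⟨Fin.cons 1 t, rfl⟩
      left_inv := fun u => Subtype.ext (by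
        funext j
        refine Fin.cases ?_ (fun j' => ?_) j
        · exact u.2.symm
        · rfl)
      right_inv := fun t => rfl }
  rw [Nat.card_congr (e1.trans e2), Nat.card_fun, Nat.card_zmod, Nat.card_eq_fintype_card,
    Fintype.card_fin]

lemma card_dot_fiber_zero (hp : p.Prime) (y : Fin (l + 1) → ZMod (p ^ (b + 1)))
    (hy : ¬ ∃ i, IsUnit (y i)) :
    Nat.card {x : Fin (l + 1) → ZMod (p ^ (b + 1)) // y ⬝ᵥ x = 1} = 0 := by
  haveI : IsEmpty {x : Fin (l + 1) → ZMod (p ^ (b + 1)) // y ⬝ᵥ x = 1} :=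
    ⟨fun x => hy (exists_unit_of_dot hp x.1 y x.2)⟩
  exact Nat.card_of_isEmpty

lemma card_base (hp : p.Prime) :
    Nat.card (Base (ZMod (p ^ (b + 1))) (l + 1)) =
      ((p ^ (b + 1)) ^ (l + 1) - (p ^ b) ^ (l + 1)) * (p ^ (b + 1)) ^ l := by
  classical
  haveI : NeZero (p ^ (b + 1)) := ⟨pow_ne_zero _ hp.pos.ne'⟩
  have e : Base (ZMod (p ^ (b + 1))) (l + 1) ≃ Σ y : Fin (l + 1) → ZMod (p ^ (b + 1)),
      {x : Fin (l + 1) → ZMod (p ^ (b + 1)) // y ⬝ᵥ x = 1} :=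
    { toFun := fun s => ⟨s.1.2, ⟨s.1.1, s.2⟩⟩
      invFun := fun t => ⟨(t.2.1, t.1), t.2.2⟩
      left_inv := fun s => rfl
      right_inv := fun t => rfl }
  rw [Nat.card_congr e, Nat.card_eq_fintype_card, Fintype.card_sigma]
  have hfib : ∀ y : Fin (l + 1) → ZMod (p ^ (b + 1)),
      Fintype.card {x : Fin (l + 1) → ZMod (p ^ (b + 1)) // y ⬝ᵥ x = 1} =
        if (∃ i, IsUnit (y i)) then (p ^ (b + 1)) ^ l else 0 := by
    intro y
    by_cases hy : ∃ i, IsUnit (y i)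
    · rw [if_pos hy, ← Nat.card_eq_fintype_card, card_dot_fiber hp y hy]
    · rw [if_neg hy, ← Nat.card_eq_fintype_card, card_dot_fiber_zero hp y hy]
  rw [Finset.sum_congr rfl fun y _ => hfib y, ← Finset.sum_filter, Finset.sum_const,
    smul_eq_mul, ← Fintype.card_subtype]
  congr 1
  -- ⊢ Fintype.card {y // ∃ i, IsUnit (y i)} = (p^(b+1))^(l+1) - (p^b)^(l+1)
  have hnon : Fintype.card {y : Fin (l + 1) → ZMod (p ^ (b + 1)) // ¬ ∃ i, IsUnit (y i)} =
      (p ^ b) ^ (l + 1) := by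
    have e2 : {y : Fin (l + 1) → ZMod (p ^ (b + 1)) // ¬ ∃ i, IsUnit (y i)} ≃
        ∀ _ : Fin (l + 1), {z : ZMod (p ^ (b + 1)) // ¬ IsUnit z} :=
      (Equiv.subtypeEquivRight fun y => not_exists).trans
        (Equiv.subtypePiEquivPi (p := fun _ z => ¬ IsUnit z))
    rw [Fintype.card_congr e2, Fintype.card_pi]
    have hz : Fintype.card {z : ZMod (p ^ (b + 1)) // ¬ IsUnit z} = p ^ b := by
      rw [← Nat.card_eq_fintype_card, card_nonunits hp]
    rw [Finset.prod_congr rfl fun _ _ => hz, Finset.prod_const, Finset.card_univ,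
      Fintype.card_fin]
  have htot : Fintype.card (Fin (l + 1) → ZMod (p ^ (b + 1))) = (p ^ (b + 1)) ^ (l + 1) := by
    rw [Fintype.card_pi, Finset.prod_congr rfl fun _ _ => ZMod.card _, Finset.prod_const,
      Finset.card_univ, Fintype.card_fin]
  have hcompl : Fintype.card {y : Fin (l + 1) → ZMod (p ^ (b + 1)) // ¬ ∃ i, IsUnit (y i)} =
      Fintype.card (Fin (l + 1) → ZMod (p ^ (b + 1))) -
        Fintype.card {y : Fin (l + 1) → ZMod (p ^ (b + 1)) // ∃ i, IsUnit (y i)} :=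
    Fintype.card_subtype_compl _
  have hle : Fintype.card {y : Fin (l + 1) → ZMod (p ^ (b + 1)) // ∃ i, IsUnit (y i)} ≤
      Fintype.card (Fin (l + 1) → ZMod (p ^ (b + 1))) := Fintype.card_subtype_le _
  have hK : Fintype.card {y : Fin (l + 1) → ZMod (p ^ (b + 1)) // ∃ i, IsUnit (y i)} =
      Fintype.card (Fin (l + 1) → ZMod (p ^ (b + 1))) - (p ^ b) ^ (l + 1) := by
    rw [← hnon, hcompl]
    exact (Nat.sub_sub_self hle).symm
  rw [hK, htot]

end BaseCount

section Recursion
variable {p b : ℕ}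

lemma card_sol_zero {R : Type} [CommRing R] [Finite R] (l : ℕ) :
    Nat.card (Sol R l 0) = 1 := by
  have hel : ∀ a c : Sol R l 0, a = c := fun a c => Subtype.ext (by
    refine Prod.ext ?_ ?_ <;> · ext i j; exact absurd j.2 (by omega))
  refine Nat.card_eq_one_iff_unique.mpr ⟨⟨hel⟩, ⟨⟨(0, 0), ?_⟩⟩⟩
  ext i j
  exact absurd i.2 (by omega)

lemma card_sol_succ (hp : p.Prime) (l m : ℕ) :
    Nat.card (Sol (ZMod (p ^ (b + 1))) (l + 1) (m + 1)) =
      Nat.card (Base (ZMod (p ^ (b + 1))) (l + 1)) *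
        Nat.card (Sol (ZMod (p ^ (b + 1))) l m) := by
  classical
  haveI : NeZero (p ^ (b + 1)) := ⟨pow_ne_zero _ hp.pos.ne'⟩
  have key : ∀ xy : Base (ZMod (p ^ (b + 1))) (l + 1),
      Nonempty (Fib xy.1.1 xy.1.2 m ≃ Sol (ZMod (p ^ (b + 1))) l m) := by
    intro xy
    obtain ⟨Q, P, h1, h2, h3, h4⟩ :=
      exists_QP xy.1.1 xy.1.2 xy.2 (exists_unit_of_dot hp xy.1.1 xy.1.2 xy.2)
    exact ⟨fibEquivSol xy.1.1 xy.1.2 Q P h1 h2 h3 h4⟩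
  calc Nat.card (Sol (ZMod (p ^ (b + 1))) (l + 1) (m + 1))
      = Nat.card (Σ xy : Base (ZMod (p ^ (b + 1))) (l + 1), Fib xy.1.1 xy.1.2 m) :=
        Nat.card_congr solEquivSigma
    _ = Nat.card (Base (ZMod (p ^ (b + 1))) (l + 1) × Sol (ZMod (p ^ (b + 1))) l m) :=
        Nat.card_congr ((Equiv.sigmaCongrRight fun xy => (key xy).some).trans
          (Equiv.sigmaEquivProd _ _))
    _ = _ := Nat.card_prod _ _

end Recursion

section RealCount
variable {p : ℕ}

lemma card_sol_real (hp : p.Prime) (b : ℕ) : ∀ m l : ℕ, m ≤ l →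
    (Nat.card (Sol (ZMod (p ^ (b + 1))) l m) : ℝ) =
      (p : ℝ) ^ (((b : ℤ) + 1) * (2 * (l : ℤ) * (m : ℤ) - (m : ℤ) ^ 2)) *
        ∏ i ∈ Finset.range m, (1 - (p : ℝ) ^ ((i : ℤ) - (l : ℤ))) := by
  haveI : NeZero (p ^ (b + 1)) := ⟨pow_ne_zero _ hp.pos.ne'⟩
  have hq : (p : ℝ) ≠ 0 := Nat.cast_ne_zero.mpr hp.pos.ne'
  intro m
  induction m with
  | zero =>
    intro l _
    rw [card_sol_zero]
    simp
  | succ m ih =>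
    intro l hml
    obtain ⟨l', rfl⟩ : ∃ l', l = l' + 1 := ⟨l - 1, by omega⟩
    rw [card_sol_succ hp, Nat.cast_mul, card_base hp, ih l' (by omega)]
    have hle1 : ((p : ℕ) ^ b) ^ (l' + 1) ≤ ((p : ℕ) ^ (b + 1)) ^ (l' + 1) :=
      Nat.pow_le_pow_left (Nat.pow_le_pow_right hp.pos (Nat.le_succ b)) _
    rw [Nat.cast_mul, Nat.cast_sub hle1]
    have hc : ∀ N : ℕ, (((p : ℕ) ^ N : ℕ) : ℝ) = (p : ℝ) ^ (N : ℤ) := by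
      intro N; push_cast; rw [← zpow_natCast]
    have hc1 : ((((p : ℕ) ^ (b + 1)) ^ (l' + 1) : ℕ) : ℝ) =
        (p : ℝ) ^ (((b : ℤ) + 1) * ((l' : ℤ) + 1)) := by
      rw [← pow_mul, hc]; congr 1 <;> (push_cast; try ring)
    have hc2 : ((((p : ℕ) ^ b) ^ (l' + 1) : ℕ) : ℝ) = (p : ℝ) ^ ((b : ℤ) * ((l' : ℤ) + 1)) := by
      rw [← pow_mul, hc]; congr 1 <;> (push_cast; try ring)
    have hc3 : ((((p : ℕ) ^ (b + 1)) ^ l' : ℕ) : ℝ) = (p : ℝ) ^ (((b : ℤ) + 1) * (l' : ℤ)) := by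
      rw [← pow_mul, hc]; congr 1 <;> (push_cast; try ring)
    rw [hc1, hc2, hc3, Finset.prod_range_succ']
    have hshift : ∀ i ∈ Finset.range m,
        (1 - (p : ℝ) ^ (((i + 1 : ℕ) : ℤ) - ((l' + 1 : ℕ) : ℤ))) =
          1 - (p : ℝ) ^ ((i : ℤ) - (l' : ℤ)) := by
      intro i _
      congr 1
      congr 1
      push_cast; ring
    rw [Finset.prod_congr rfl hshift]
    push_cast
    set q : ℝ := (p : ℝ) with hqd
    set Pi : ℝ := ∏ i ∈ Finset.range m, (1 - q ^ ((i : ℤ) - (l' : ℤ))) with hPi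
    set E : ℤ := ((b : ℤ) + 1) * (2 * ((l' : ℤ) + 1) * ((m : ℤ) + 1) - ((m : ℤ) + 1) ^ 2) with hE
    have e1 : q ^ (((b : ℤ) + 1) * ((l' : ℤ) + 1)) * q ^ (((b : ℤ) + 1) * (l' : ℤ)) *
        q ^ (((b : ℤ) + 1) * (2 * (l' : ℤ) * (m : ℤ) - (m : ℤ) ^ 2)) = q ^ E := by
      rw [← zpow_add₀ hq, ← zpow_add₀ hq]
      congr 1
      rw [hE]; ring
    have e2 : q ^ ((b : ℤ) * ((l' : ℤ) + 1)) * q ^ (((b : ℤ) + 1) * (l' : ℤ)) *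
        q ^ (((b : ℤ) + 1) * (2 * (l' : ℤ) * (m : ℤ) - (m : ℤ) ^ 2)) =
          q ^ E * q ^ ((0 : ℤ) - ((l' : ℤ) + 1)) := by
      rw [← zpow_add₀ hq, ← zpow_add₀ hq, ← zpow_add₀ hq]
      congr 1
      rw [hE]; ring
    linear_combination Pi * e1 - Pi * e2

end RealCount

/-- In the split case `K_p = ℚ_p ⊕ ℚ_p`, the local density `α_p(1_l, 1_m)` is the limit
`lim_{a→∞} p^{a(−2lm+m²)} #{(X,Y) ∈ (M_{l,m}(ℤ/p^aℤ))² : Yᵀ X = 1_m}`, and it equals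
`∏_{i=0}^{m-1} (1 − p^{i−l})`. -/
theorem stmt8 (p : ℕ) (hp : p.Prime) (l m : ℕ) (hm : 1 ≤ m) (hlm : m ≤ l) :
    Tendsto
      (fun a : ℕ =>
        (p : ℝ) ^ ((-2 * (l : ℤ) * m + (m : ℤ) ^ 2) * a) *
          (Nat.card {XY : Matrix (Fin l) (Fin m) (ZMod (p ^ a)) ×
              Matrix (Fin l) (Fin m) (ZMod (p ^ a)) // XY.2ᵀ * XY.1 = 1} : ℝ))
      atTop (nhds (∏ i ∈ Finset.range m, (1 - (p : ℝ) ^ ((i : ℤ) - l)))) := by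
  have hq : (p : ℝ) ≠ 0 := Nat.cast_ne_zero.mpr hp.pos.ne'
  refine Tendsto.congr' ?_ tendsto_const_nhds
  filter_upwards [Filter.eventually_ge_atTop 1] with a ha
  obtain ⟨b, rfl⟩ : ∃ b, a = b + 1 := ⟨a - 1, by omega⟩
  show _ = (p : ℝ) ^ ((-2 * (l : ℤ) * m + (m : ℤ) ^ 2) * ((b + 1 : ℕ) : ℤ)) *
    (Nat.card (Sol (ZMod (p ^ (b + 1))) l m) : ℝ)
  rw [card_sol_real hp b m l hlm, ← mul_assoc, ← zpow_add₀ hq,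
    show (-2 * (l : ℤ) * m + (m : ℤ) ^ 2) * ((b + 1 : ℕ) : ℤ) +
      ((b : ℤ) + 1) * (2 * (l : ℤ) * (m : ℤ) - (m : ℤ) ^ 2) = 0 by push_cast; ring,
    zpow_zero, one_mul]
end

section
/- For l ≥ m ≥ 1 and a prime p, the number of pairs (X, Y) of l×m matrices over Z/pZ satisfying Yᵀ X = 1_m equals p^{2lm − m²} · ∏_{i=0}^{m-1} (1 − p^{−l+i}). -/
open Matrix

section Aux

variable (p : ℕ) [Fact p.Prime] (l m : ℕ)

/-- The linear map `Y ↦ Yᵀ * X`. -/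
noncomputable def auxMap (X : Matrix (Fin l) (Fin m) (ZMod p)) :
    Matrix (Fin l) (Fin m) (ZMod p) →ₗ[ZMod p] Matrix (Fin m) (Fin m) (ZMod p) where
  toFun Y := Yᵀ * X
  map_add' Y Z := by rw [transpose_add, Matrix.add_mul]
  map_smul' c Y := by rw [transpose_smul, Matrix.smul_mul]; rfl

lemma auxMap_surjective (X : Matrix (Fin l) (Fin m) (ZMod p))
    (Y₀ : Matrix (Fin l) (Fin m) (ZMod p)) (hY₀ : Y₀ᵀ * X = 1) :
    Function.Surjective (auxMap p l m X) := by
  intro A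
  refine ⟨Y₀ * Aᵀ, ?_⟩
  simp only [auxMap, LinearMap.coe_mk, AddHom.coe_mk, transpose_mul, transpose_transpose,
    Matrix.mul_assoc, hY₀, Matrix.mul_one]

lemma mulVec_eq_sum_smul (X : Matrix (Fin l) (Fin m) (ZMod p)) (v : Fin m → ZMod p) :
    X.mulVec v = ∑ j : Fin m, v j • (fun i => X i j) := by
  funext i
  simp [Matrix.mulVec, dotProduct, Finset.sum_apply, mul_comm]

/-- If `X` has a left inverse, its columns are linearly independent. -/
lemma linIndep_of_leftInv (X : Matrix (Fin l) (Fin m) (ZMod p))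
    (Y : Matrix (Fin l) (Fin m) (ZMod p)) (hY : Yᵀ * X = 1) :
    LinearIndependent (ZMod p) (fun j : Fin m => (fun i => X i j : Fin l → ZMod p)) := by
  rw [Fintype.linearIndependent_iff]
  intro g hg j
  have h1 : X.mulVec g = 0 := by
    rw [mulVec_eq_sum_smul]; exact hg
  have h2 : (Yᵀ * X).mulVec g = 0 := by
    rw [← Matrix.mulVec_mulVec, h1, Matrix.mulVec_zero]
  rw [hY, Matrix.one_mulVec] at h2
  exact congrFun h2 j

/-- If the columns of `X` are linearly independent, `X` has a left inverse. -/
lemma exists_leftInv_of_linIndep (X : Matrix (Fin l) (Fin m) (ZMod p))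
    (h : LinearIndependent (ZMod p) (fun j : Fin m => (fun i => X i j : Fin l → ZMod p))) :
    ∃ Y : Matrix (Fin l) (Fin m) (ZMod p), Yᵀ * X = 1 := by
  have hinj : Function.Injective X.mulVecLin := by
    intro v w hvw
    have h' := Fintype.linearIndependent_iff.mp h (v - w) ?_
    · funext j; have := h' j; simpa [sub_eq_zero] using this
    · rw [← mulVec_eq_sum_smul]
      show X.mulVec (v - w) = 0
      have : X.mulVec v = X.mulVec w := hvw
      rw [Matrix.mulVec_sub, this, sub_self]
  obtain ⟨g, hg⟩ := LinearMap.exists_leftInverse_of_injective X.mulVecLin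
    (LinearMap.ker_eq_bot.mpr hinj)
  refine ⟨(LinearMap.toMatrix' g)ᵀ, ?_⟩
  rw [transpose_transpose]
  have h2 : LinearMap.toMatrix' (g ∘ₗ X.mulVecLin) = LinearMap.toMatrix' g * X := by
    rw [LinearMap.toMatrix'_comp, ← Matrix.toLin'_apply', LinearMap.toMatrix'_toLin']
  rw [← h2, hg, LinearMap.toMatrix'_id]

lemma card_mat (a b : ℕ) : Fintype.card (Matrix (Fin a) (Fin b) (ZMod p)) = p ^ (a * b) := by
  have h : Fintype.card (Matrix (Fin a) (Fin b) (ZMod p))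
      = Fintype.card (Fin a → Fin b → ZMod p) := Fintype.card_congr (Equiv.refl _)
  rw [h, Fintype.card_fun, Fintype.card_fun, ZMod.card, Fintype.card_fin, Fintype.card_fin,
    ← pow_mul, mul_comm b a]

end Aux

/-- For `l ≥ m ≥ 1` and a prime `p`, the number of pairs `(X, Y)` of `l × m`
matrices over `ℤ/pℤ` with `Yᵀ X = 1ₘ` equals `p^(2lm - m²) ∏_{i=0}^{m-1} (1 - p^(i-l))`. -/
theorem stmt9 (p : ℕ) (hp : p.Prime) (l m : ℕ) (hm : 1 ≤ m) (hlm : m ≤ l) :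
    (Nat.card {XY : Matrix (Fin l) (Fin m) (ZMod p) × Matrix (Fin l) (Fin m) (ZMod p) //
        XY.2ᵀ * XY.1 = 1} : ℝ) =
      (p : ℝ) ^ (2 * l * m - m ^ 2) *
        ∏ i ∈ Finset.range m, (1 - (p : ℝ) ^ ((i : ℤ) - l)) := by
  haveI : Fact p.Prime := ⟨hp⟩
  classical
  set S := { s : Fin m → (Fin l → ZMod p) // LinearIndependent (ZMod p) s } with hS
  -- the equivalence with a sigma type
  let F : S → Type _ := fun X =>
    { Y : Matrix (Fin l) (Fin m) (ZMod p) // Yᵀ * (Matrix.of X.1)ᵀ = 1 }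
  let e : {XY : Matrix (Fin l) (Fin m) (ZMod p) × Matrix (Fin l) (Fin m) (ZMod p) //
      XY.2ᵀ * XY.1 = 1} ≃ Σ X : S, F X :=
    { toFun := fun z => ⟨⟨fun j i => z.1.1 i j,
        linIndep_of_leftInv p l m z.1.1 z.1.2 z.2⟩, ⟨z.1.2, by
          have : (Matrix.of fun j i => z.1.1 i j)ᵀ = z.1.1 := by ext i j; rfl
          rw [this]; exact z.2⟩⟩
      invFun := fun z => ⟨((Matrix.of z.1.1)ᵀ, z.2.1), z.2.2⟩
      left_inv := fun z => rfl
      right_inv := fun z => rfl }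
  -- fiber cardinality
  have hfiber : ∀ X : S, Nat.card (F X) = p ^ (l * m - m * m) := by
    intro X
    obtain ⟨Y₀, hY₀⟩ := exists_leftInv_of_linIndep p l m (Matrix.of X.1)ᵀ
      (by convert X.2 using 1; rfl)
    set f := auxMap p l m (Matrix.of X.1)ᵀ with hf
    have hsurj : Function.Surjective f := auxMap_surjective p l m _ Y₀ hY₀
    -- fiber ≃ kernel
    have hY₀' : f Y₀ = 1 := hY₀
    let e2 : F X ≃ LinearMap.ker f :=
      { toFun := fun z => ⟨z.1 - Y₀, by
          simp only [LinearMap.mem_ker, map_sub, hY₀']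
          have : f z.1 = 1 := z.2
          rw [this, sub_self]⟩
        invFun := fun z => ⟨z.1 + Y₀, by
          show f (z.1 + Y₀) = 1
          rw [map_add, hY₀', z.2, zero_add]⟩
        left_inv := fun z => by ext : 1; simp
        right_inv := fun z => by ext : 1; simp }
    rw [Nat.card_congr e2]
    -- card of kernel via first isomorphism theorem
    have hquot : Nat.card (Matrix (Fin l) (Fin m) (ZMod p) ⧸ LinearMap.ker f)
        = p ^ (m * m) := by
      rw [Nat.card_congr (f.quotKerEquivOfSurjective hsurj).toEquiv]
      rw [Nat.card_eq_fintype_card, card_mat]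
    have htot : Nat.card (Matrix (Fin l) (Fin m) (ZMod p)) = p ^ (l * m) := by
      rw [Nat.card_eq_fintype_card, card_mat]
    have hmul := AddSubgroup.card_eq_card_quotient_mul_card_addSubgroup
      (LinearMap.ker f).toAddSubgroup
    rw [htot] at hmul
    have hq2 : Nat.card (Matrix (Fin l) (Fin m) (ZMod p) ⧸
        (LinearMap.ker f).toAddSubgroup) = p ^ (m * m) := by
      rw [← hquot]; rfl
    rw [hq2] at hmul
    have hk : Nat.card (LinearMap.ker f) = Nat.card (LinearMap.ker f).toAddSubgroup := rfl
    have hle : m * m ≤ l * m := Nat.mul_le_mul_right m hlm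
    have : p ^ (m * m) * p ^ (l * m - m * m) = p ^ (l * m) := by
      rw [← pow_add, Nat.add_sub_cancel' hle]
    rw [← this] at hmul
    rw [hk]
    exact (Nat.eq_of_mul_eq_mul_left (pow_pos hp.pos _) hmul).symm
  -- base cardinality
  have hbase : Nat.card S = ∏ i : Fin m, (p ^ l - p ^ (i : ℕ)) := by
    have := card_linearIndependent (K := ZMod p) (V := Fin l → ZMod p)
      (k := m) (by simp [Module.finrank_fintype_fun_eq_card]; exact hlm)
    simpa [ZMod.card, Module.finrank_fintype_fun_eq_card] using this
  -- total count as a natural number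
  have htotal : Nat.card {XY : Matrix (Fin l) (Fin m) (ZMod p) ×
      Matrix (Fin l) (Fin m) (ZMod p) // XY.2ᵀ * XY.1 = 1}
      = (∏ i : Fin m, (p ^ l - p ^ (i : ℕ))) * p ^ (l * m - m * m) := by
    rw [Nat.card_congr e]
    haveI : ∀ X : S, Fintype (F X) := fun X => Fintype.ofFinite _
    haveI : Fintype S := Fintype.ofFinite _
    rw [Nat.card_eq_fintype_card, Fintype.card_sigma]
    have : ∀ X : S, Fintype.card (F X) = p ^ (l * m - m * m) := by
      intro X; rw [← Nat.card_eq_fintype_card]; exact hfiber X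
    rw [Finset.sum_congr rfl (fun X _ => this X), Finset.sum_const, Finset.card_univ,
      ← Nat.card_eq_fintype_card, hbase, smul_eq_mul]
  rw [htotal]
  -- now the real-number computation
  have hp0 : (0:ℝ) < (p:ℝ) := by exact_mod_cast hp.pos
  push_cast
  rw [Fin.prod_univ_eq_prod_range (fun i => ((p ^ l - p ^ i : ℕ) : ℝ)) m]
  have hcast : ∀ i ∈ Finset.range m, ((p ^ l - p ^ i : ℕ) : ℝ)
      = (p:ℝ)^l - (p:ℝ)^i := by
    intro i hi
    have : p ^ i ≤ p ^ l :=
      Nat.pow_le_pow_right hp.pos (le_trans (Finset.mem_range.mp hi).le hlm)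
    push_cast [Nat.cast_sub this]
    ring
  rw [Finset.prod_congr rfl hcast]
  have hfac : ∀ i ∈ Finset.range m, (1 - (p:ℝ) ^ ((i:ℤ) - l))
      = ((p:ℝ)^l - (p:ℝ)^i) / (p:ℝ)^l := by
    intro i hi
    rw [zpow_sub₀ hp0.ne', zpow_natCast, zpow_natCast]
    field_simp
  rw [Finset.prod_congr rfl hfac, Finset.prod_div_distrib, Finset.prod_const,
    Finset.card_range]
  have h1 : m * m ≤ l * m := Nat.mul_le_mul_right m hlm
  have h2 : 2 * l * m - m ^ 2 = l * m + (l * m - m * m) := by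
    rw [sq, two_mul, add_mul, Nat.add_sub_assoc h1]
  rw [h2, pow_add]
  have hne : ((p:ℝ)^l)^m ≠ 0 := pow_ne_zero _ (pow_ne_zero _ hp0.ne')
  field_simp
  ring_nf
end

section
/- Let L(t) be a rational function in t over a field, and suppose L(t) = N(t)/(∏_{i=1}^{m}(1 + (−1)^i p^{−i}X^{−1}t) ∏_{i=1}^{m}(1 − p^{−2i}X²t²)) with N a polynomial of degree ≤ m in t. If additionally L satisfies the functional equation L(t)|_{X ↦ −X^{−1}} = L(t), then L(t) = c/(∏_{i=1}^{m}(1 + (−1)^i p^{−i}X^{−1}t)(1 − (−1)^i p^{−i}Xt)) for some constant c independent of t. -/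
/-- The field `ℚ(X)` of rational functions in `X`. -/
abbrev FX : Type := RatFunc ℚ

/-- The field `ℚ(X)(t)` of rational functions in `t` over `ℚ(X)`. -/
abbrev FXt : Type := RatFunc FX

/-- The element `X` of `ℚ(X)(t)`. -/
noncomputable def xVar : FXt := RatFunc.C (RatFunc.X : FX)

/-- The element `t` of `ℚ(X)(t)`. -/
noncomputable def tVar : FXt := RatFunc.X

lemma xVar_def : xVar = RatFunc.C (RatFunc.X : FX) := rfl
lemma tVar_def : tVar = (RatFunc.X : FXt) := rfl

/-- The linear polynomial `1 + u·t` in `t` over `ℚ(X)`. -/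
noncomputable def lin (u : FX) : Polynomial FX := Polynomial.C u * Polynomial.X + 1

lemma lin_ne_zero (u : FX) : lin u ≠ 0 := by
  intro h
  have := congrArg (fun q => Polynomial.coeff q 0) h
  simp [lin] at this

lemma natDegree_lin {u : FX} (hu : u ≠ 0) : (lin u).natDegree = 1 := by
  have : lin u = Polynomial.C u * Polynomial.X + Polynomial.C 1 := by simp [lin]
  rw [this, Polynomial.natDegree_linear hu]

lemma map_lin (u : FX) :
    algebraMap (Polynomial FX) FXt (lin u) = 1 + RatFunc.C u * tVar := by
  simp [lin, tVar, RatFunc.algebraMap_C, RatFunc.algebraMap_X]; ring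

lemma lin_coprime {u v : FX} (h : u ≠ v) : IsCoprime (lin u) (lin v) := by
  have hs : u - v ≠ 0 := sub_ne_zero.mpr h
  refine ⟨Polynomial.C ((u - v)⁻¹ * -v), Polynomial.C ((u - v)⁻¹ * u), ?_⟩
  have key : Polynomial.C ((u-v)⁻¹ * -v) * lin u + Polynomial.C ((u-v)⁻¹ * u) * lin v
      = Polynomial.C ((u-v)⁻¹ * (u - v)) := by
    simp only [lin, Polynomial.C_mul, Polynomial.C_sub, Polynomial.C_neg]
    ring
  rw [key, inv_mul_cancel₀ hs, Polynomial.C_1]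

lemma phi_C (Φ : FXt →+* FXt) (hΦX : Φ xVar = -xVar⁻¹)
    (hΦc : ∀ q : ℚ, Φ (RatFunc.C (RatFunc.C q)) = RatFunc.C (RatFunc.C q)) :
    ∀ f : FX, ∃ g : FX, Φ (RatFunc.C f) = RatFunc.C g := by
  have hX : Φ (RatFunc.C (RatFunc.X : FX)) = RatFunc.C (-(RatFunc.X : FX)⁻¹) := by
    rw [xVar_def] at hΦX
    rw [hΦX, map_neg, map_inv₀]
  have hpoly : ∀ P : Polynomial ℚ, ∃ g : FX,
      Φ (RatFunc.C (algebraMap (Polynomial ℚ) FX P)) = RatFunc.C g := by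
    intro P
    induction P using Polynomial.induction_on with
    | C q =>
        refine ⟨RatFunc.C q, ?_⟩
        rw [RatFunc.algebraMap_C]
        exact hΦc q
    | add P₁ P₂ h₁ h₂ =>
        obtain ⟨g₁, hg₁⟩ := h₁; obtain ⟨g₂, hg₂⟩ := h₂
        exact ⟨g₁ + g₂, by rw [map_add, map_add, map_add, hg₁, hg₂, map_add]⟩
    | monomial n q h =>
        obtain ⟨g, hg⟩ := h
        refine ⟨g * -(RatFunc.X : FX)⁻¹, ?_⟩
        have h1 : (Polynomial.C q * Polynomial.X ^ (n + 1) : Polynomial ℚ)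
            = Polynomial.C q * Polynomial.X ^ n * Polynomial.X := by ring
        rw [h1, map_mul, map_mul, map_mul, hg, RatFunc.algebraMap_X, hX, map_mul]
  intro f
  induction f using RatFunc.induction_on with
  | f P Q hQ =>
      obtain ⟨g₁, hg₁⟩ := hpoly P
      obtain ⟨g₂, hg₂⟩ := hpoly Q
      exact ⟨g₁ / g₂, by rw [map_div₀, map_div₀, hg₁, hg₂, map_div₀]⟩

lemma phi_poly (Φ : FXt →+* FXt) (hΦt : Φ tVar = tVar) (hΦX : Φ xVar = -xVar⁻¹)
    (hΦc : ∀ q : ℚ, Φ (RatFunc.C (RatFunc.C q)) = RatFunc.C (RatFunc.C q)) :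
    ∀ P : Polynomial FX, ∃ Q : Polynomial FX,
      Φ (algebraMap (Polynomial FX) FXt P) = algebraMap (Polynomial FX) FXt Q := by
  intro P
  induction P using Polynomial.induction_on' with
  | add P₁ P₂ h₁ h₂ =>
      obtain ⟨Q₁, hQ₁⟩ := h₁; obtain ⟨Q₂, hQ₂⟩ := h₂
      exact ⟨Q₁ + Q₂, by rw [map_add, map_add, hQ₁, hQ₂, map_add]⟩
  | monomial n a =>
      obtain ⟨g, hg⟩ := phi_C Φ hΦX hΦc a
      refine ⟨Polynomial.C g * Polynomial.X ^ n, ?_⟩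
      rw [tVar_def] at hΦt
      rw [← Polynomial.C_mul_X_pow_eq_monomial, map_mul, map_pow, RatFunc.algebraMap_C,
        RatFunc.algebraMap_X, map_mul, map_pow, hg, hΦt, map_mul, map_pow,
        RatFunc.algebraMap_C, RatFunc.algebraMap_X]

def alphaQ (p i : ℕ) : ℚ := (-1)^i * (p:ℚ)^(-(i:ℤ))
noncomputable def aCoef (p i : ℕ) : FX := RatFunc.C (alphaQ p i) * (RatFunc.X : FX)⁻¹
noncomputable def bCoef (p i : ℕ) : FX := RatFunc.C (alphaQ p i) * (RatFunc.X : FX)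

lemma alphaQ_ne_zero {p : ℕ} (hp : p ≠ 0) (i : ℕ) : alphaQ p i ≠ 0 := by
  have : (p:ℚ) ≠ 0 := Nat.cast_ne_zero.mpr hp
  exact mul_ne_zero (pow_ne_zero _ (by norm_num)) (zpow_ne_zero _ this)

lemma aCoef_ne_zero {p : ℕ} (hp : p ≠ 0) (i : ℕ) : aCoef p i ≠ 0 :=
  mul_ne_zero ((map_ne_zero RatFunc.C).mpr (alphaQ_ne_zero hp i)) (inv_ne_zero RatFunc.X_ne_zero)

lemma bCoef_ne_zero {p : ℕ} (hp : p ≠ 0) (i : ℕ) : bCoef p i ≠ 0 :=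
  mul_ne_zero ((map_ne_zero RatFunc.C).mpr (alphaQ_ne_zero hp i)) RatFunc.X_ne_zero

lemma C_aCoef (p i : ℕ) :
    RatFunc.C (aCoef p i) = (-1)^i * (p:FXt)^(-(i:ℤ)) * xVar⁻¹ := by
  simp only [aCoef, alphaQ, map_mul, map_pow, map_neg, map_one, map_zpow₀, map_inv₀,
    map_natCast, xVar_def]

lemma C_bCoef (p i : ℕ) :
    RatFunc.C (bCoef p i) = (-1)^i * (p:FXt)^(-(i:ℤ)) * xVar := by
  simp only [bCoef, alphaQ, map_mul, map_pow, map_neg, map_one, map_zpow₀,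
    map_natCast, xVar_def]

lemma factorA (p i : ℕ) :
    algebraMap (Polynomial FX) FXt (lin (aCoef p i))
      = 1 + (-1)^i * (p:FXt)^(-(i:ℤ)) * xVar⁻¹ * tVar := by
  rw [map_lin, C_aCoef]

lemma factorC (p i : ℕ) :
    algebraMap (Polynomial FX) FXt (lin (-(bCoef p i)))
      = 1 - (-1)^i * (p:FXt)^(-(i:ℤ)) * xVar * tVar := by
  rw [map_lin, map_neg, C_bCoef]; ring

lemma factorB {p : ℕ} (hp : (p:FXt) ≠ 0) (i : ℕ) :
    algebraMap (Polynomial FX) FXt (lin (bCoef p i) * lin (-(bCoef p i)))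
      = 1 - (p:FXt)^(-(2*(i:ℤ))) * xVar^2 * tVar^2 := by
  rw [map_mul, map_lin, map_lin, map_neg, C_bCoef]
  have h2 : (p:FXt)^(-(2*(i:ℤ))) = ((p:FXt)^(-(i:ℤ)))^2 := by
    rw [show -(2*(i:ℤ)) = (-(i:ℤ)) + (-(i:ℤ)) by ring, zpow_add₀ hp, sq]
  rw [h2]
  have hsq : ((-1:FXt)^i)^2 = 1 := by
    rw [← pow_mul, mul_comm, pow_mul]; norm_num
  linear_combination (-((p:FXt)^(-(i:ℤ)))^2 * xVar^2 * tVar^2) * hsq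

lemma Xsq_ne_C (r : ℚ) : (RatFunc.X : FX)^2 ≠ RatFunc.C r := by
  intro h
  have h4 : (Polynomial.X^2 : Polynomial ℚ) = Polynomial.C r :=
    RatFunc.algebraMap_injective ℚ
      (by rw [map_pow, RatFunc.algebraMap_X, RatFunc.algebraMap_C, h])
  have h5 := congrArg Polynomial.natDegree h4
  simp [Polynomial.natDegree_X_pow] at h5

lemma b_ne_neg_a {p : ℕ} (hp : p ≠ 0) (i j : ℕ) : bCoef p i ≠ -(aCoef p j) := by
  intro h
  have hX : (RatFunc.X : FX) ≠ 0 := RatFunc.X_ne_zero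
  have hCi : RatFunc.C (alphaQ p i) ≠ 0 := (map_ne_zero _).mpr (alphaQ_ne_zero hp i)
  apply Xsq_ne_C (-(alphaQ p j)/(alphaQ p i))
  rw [map_div₀, eq_div_iff hCi, map_neg]
  simp only [bCoef, aCoef] at h
  have h' := congrArg (fun z => z * RatFunc.X) h
  have hinv : (RatFunc.X : FX)⁻¹ * RatFunc.X = 1 := inv_mul_cancel₀ hX
  linear_combination h' - RatFunc.C (alphaQ p j) * hinv

lemma phi_Ca (Φ : FXt →+* FXt) (hΦX : Φ xVar = -xVar⁻¹)
    (hΦc : ∀ q : ℚ, Φ (RatFunc.C (RatFunc.C q)) = RatFunc.C (RatFunc.C q)) (p i : ℕ) :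
    Φ (RatFunc.C (aCoef p i)) = RatFunc.C (-(bCoef p i)) := by
  simp only [aCoef, bCoef, map_mul, map_neg, map_inv₀]
  rw [← xVar_def, hΦc, hΦX, neg_inv, inv_inv]
  ring

lemma phi_Cb (Φ : FXt →+* FXt) (hΦX : Φ xVar = -xVar⁻¹)
    (hΦc : ∀ q : ℚ, Φ (RatFunc.C (RatFunc.C q)) = RatFunc.C (RatFunc.C q)) (p i : ℕ) :
    Φ (RatFunc.C (bCoef p i)) = RatFunc.C (-(aCoef p i)) := by
  simp only [aCoef, bCoef, map_mul, map_neg, map_inv₀]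
  rw [← xVar_def, hΦc, hΦX]
  ring

lemma phi_Cnegb (Φ : FXt →+* FXt) (hΦX : Φ xVar = -xVar⁻¹)
    (hΦc : ∀ q : ℚ, Φ (RatFunc.C (RatFunc.C q)) = RatFunc.C (RatFunc.C q)) (p i : ℕ) :
    Φ (RatFunc.C (-(bCoef p i))) = RatFunc.C (aCoef p i) := by
  rw [map_neg, map_neg, phi_Cb Φ hΦX hΦc p i, map_neg, neg_neg]

lemma phi_lin (Φ : FXt →+* FXt) (hΦt : Φ tVar = tVar) {u w : FX}
    (h : Φ (RatFunc.C u) = RatFunc.C w) :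
    Φ (algebraMap (Polynomial FX) FXt (lin u)) = algebraMap (Polynomial FX) FXt (lin w) := by
  rw [map_lin, map_lin, map_add, map_one, map_mul, h, hΦt]

/-- The rational-function argument from the proof of Theorem 4.3.1(1).  Work in the
field `ℚ(X)(t)`; let `Φ` be a field endomorphism realizing the substitution
`X ↦ −X⁻¹` (fixing `t` and the rational constants).  If
`L = N(t)/(∏_{i=1}^m (1 + (−1)^i p^{−i} X⁻¹ t) · ∏_{i=1}^m (1 − p^{−2i} X² t²))`
with `N` a polynomial of degree ≤ m in `t`, and `Φ L = L`, then
`L = c / ∏_{i=1}^m (1 + (−1)^i p^{−i} X⁻¹ t)(1 − (−1)^i p^{−i} X t)` for a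
constant `c` independent of `t`. -/
theorem stmt18 (p : ℕ) (hp : p.Prime) (m : ℕ) (hm : 1 ≤ m)
    (Φ : FXt →+* FXt)
    (hΦt : Φ tVar = tVar)
    (hΦX : Φ xVar = -xVar⁻¹)
    (hΦc : ∀ q : ℚ, Φ (RatFunc.C (RatFunc.C q)) = RatFunc.C (RatFunc.C q))
    (N : Polynomial FX) (hdeg : N.natDegree ≤ m)
    (L : FXt)
    (hL : L = algebraMap (Polynomial FX) FXt N /
      ((∏ i ∈ Finset.Icc 1 m,
          (1 + (-1) ^ i * (p : FXt) ^ (-(i : ℤ)) * xVar⁻¹ * tVar)) *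
        ∏ i ∈ Finset.Icc 1 m,
          (1 - (p : FXt) ^ (-(2 * (i : ℤ))) * xVar ^ 2 * tVar ^ 2)))
    (hfe : Φ L = L) :
    ∃ c : FX,
      L = RatFunc.C c /
        ∏ i ∈ Finset.Icc 1 m,
          ((1 + (-1) ^ i * (p : FXt) ^ (-(i : ℤ)) * xVar⁻¹ * tVar) *
            (1 - (-1) ^ i * (p : FXt) ^ (-(i : ℤ)) * xVar * tVar)) := by
  have hp0 : p ≠ 0 := hp.ne_zero
  have hpq : ((p : ℚ)) ≠ 0 := Nat.cast_ne_zero.mpr hp0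
  have hpt : (p : FXt) ≠ 0 := by
    have h1 : RatFunc.C (RatFunc.C (p : ℚ)) = (p : FXt) := by
      rw [map_natCast, map_natCast]
    rw [← h1]
    exact (map_ne_zero _).mpr ((map_ne_zero _).mpr hpq)
  have hinj := RatFunc.algebraMap_injective FX
  set A : Polynomial FX := ∏ i ∈ Finset.Icc 1 m, lin (aCoef p i) with hA
  set E : Polynomial FX := ∏ i ∈ Finset.Icc 1 m, lin (bCoef p i) with hE
  set Cp : Polynomial FX := ∏ i ∈ Finset.Icc 1 m, lin (-(bCoef p i)) with hCp
  set F : Polynomial FX := ∏ i ∈ Finset.Icc 1 m, lin (-(aCoef p i)) with hF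
  have hAne : A ≠ 0 := Finset.prod_ne_zero_iff.mpr fun i _ => lin_ne_zero _
  have hEne : E ≠ 0 := Finset.prod_ne_zero_iff.mpr fun i _ => lin_ne_zero _
  have hCpne : Cp ≠ 0 := Finset.prod_ne_zero_iff.mpr fun i _ => lin_ne_zero _
  have hFne : F ≠ 0 := Finset.prod_ne_zero_iff.mpr fun i _ => lin_ne_zero _
  have hAmap : algebraMap (Polynomial FX) FXt A
      = ∏ i ∈ Finset.Icc 1 m,
          (1 + (-1) ^ i * (p : FXt) ^ (-(i : ℤ)) * xVar⁻¹ * tVar) := by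
    rw [hA, map_prod]
    exact Finset.prod_congr rfl fun i _ => factorA p i
  have hECmap : algebraMap (Polynomial FX) FXt (E * Cp)
      = ∏ i ∈ Finset.Icc 1 m,
          (1 - (p : FXt) ^ (-(2 * (i : ℤ))) * xVar ^ 2 * tVar ^ 2) := by
    rw [hE, hCp, ← Finset.prod_mul_distrib, map_prod]
    exact Finset.prod_congr rfl fun i _ => factorB hpt i
  have hL2 : L = algebraMap (Polynomial FX) FXt N
      / algebraMap (Polynomial FX) FXt (A * (E * Cp)) := by
    rw [hL, ← hAmap, ← hECmap, ← map_mul]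
  have hDne : algebraMap (Polynomial FX) FXt (A * (E * Cp)) ≠ 0 :=
    (map_ne_zero_iff _ hinj).mpr (mul_ne_zero hAne (mul_ne_zero hEne hCpne))
  have hL3 : L * algebraMap (Polynomial FX) FXt (A * (E * Cp))
      = algebraMap (Polynomial FX) FXt N := by
    rw [hL2, div_mul_cancel₀ _ hDne]
  have hΦA : Φ (algebraMap (Polynomial FX) FXt A) = algebraMap (Polynomial FX) FXt Cp := by
    rw [hA, hCp]
    simp only [map_prod]
    exact Finset.prod_congr rfl fun i _ => phi_lin Φ hΦt (phi_Ca Φ hΦX hΦc p i)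
  have hΦE : Φ (algebraMap (Polynomial FX) FXt E) = algebraMap (Polynomial FX) FXt F := by
    rw [hE, hF]
    simp only [map_prod]
    exact Finset.prod_congr rfl fun i _ => phi_lin Φ hΦt (phi_Cb Φ hΦX hΦc p i)
  have hΦCp : Φ (algebraMap (Polynomial FX) FXt Cp) = algebraMap (Polynomial FX) FXt A := by
    rw [hCp, hA]
    simp only [map_prod]
    exact Finset.prod_congr rfl fun i _ => phi_lin Φ hΦt (phi_Cnegb Φ hΦX hΦc p i)
  obtain ⟨Q, hQ⟩ := phi_poly Φ hΦt hΦX hΦc N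
  have h5 : L * algebraMap (Polynomial FX) FXt (Cp * (F * A))
      = algebraMap (Polynomial FX) FXt Q := by
    have h := congrArg Φ hL3
    rw [map_mul, hfe, hQ] at h
    have hden : Φ (algebraMap (Polynomial FX) FXt (A * (E * Cp)))
        = algebraMap (Polynomial FX) FXt (Cp * (F * A)) := by
      simp only [map_mul]
      rw [hΦA, hΦE, hΦCp]
    rw [hden] at h
    exact h
  have h7 : N * (Cp * (F * A)) = Q * (A * (E * Cp)) := by
    apply hinj
    have e1 := hL3
    have e2 := h5
    simp only [map_mul] at e1 e2 ⊢
    linear_combination (-(algebraMap (Polynomial FX) FXt Cp *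
        (algebraMap (Polynomial FX) FXt F * algebraMap (Polynomial FX) FXt A))) * e1 +
      (algebraMap (Polynomial FX) FXt A *
        (algebraMap (Polynomial FX) FXt E * algebraMap (Polynomial FX) FXt Cp)) * e2
  have h8 : N * F = Q * E :=
    mul_left_cancel₀ (mul_ne_zero hAne hCpne) (by linear_combination h7)
  have hcop : IsCoprime E F := by
    rw [hE, hF]
    apply IsCoprime.prod_left
    intro i _
    apply IsCoprime.prod_right
    intro j _
    exact lin_coprime (b_ne_neg_a hp0 i j)
  have hdvd : E ∣ N := hcop.dvd_of_dvd_mul_right ⟨Q, by linear_combination h8⟩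
  by_cases hN : N = 0
  · refine ⟨0, ?_⟩
    rw [hL2, hN, map_zero, zero_div, map_zero, zero_div]
  · obtain ⟨c₀, hc₀⟩ := hdvd
    have hc₀ne : c₀ ≠ 0 := fun h0 => hN (by rw [hc₀, h0, mul_zero])
    have hdegE : E.natDegree = m := by
      rw [hE, Polynomial.natDegree_prod _ _ fun i _ => lin_ne_zero _,
        Finset.sum_congr rfl fun i _ => natDegree_lin (bCoef_ne_zero hp0 i)]
      simp [Nat.card_Icc]
    have hdegc : c₀.natDegree = 0 := by
      have h9 : N.natDegree = m + c₀.natDegree := by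
        rw [hc₀, Polynomial.natDegree_mul hEne hc₀ne, hdegE]
      omega
    obtain ⟨c, hc⟩ := Polynomial.natDegree_eq_zero.mp hdegc
    refine ⟨c, ?_⟩
    have hgoalden : (∏ i ∈ Finset.Icc 1 m,
        ((1 + (-1) ^ i * (p : FXt) ^ (-(i : ℤ)) * xVar⁻¹ * tVar) *
          (1 - (-1) ^ i * (p : FXt) ^ (-(i : ℤ)) * xVar * tVar)))
        = algebraMap (Polynomial FX) FXt (A * Cp) := by
      rw [map_mul, hA, hCp, map_prod, map_prod, ← Finset.prod_mul_distrib]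
      exact Finset.prod_congr rfl fun i _ => by rw [factorA, factorC]
    have hEm : algebraMap (Polynomial FX) FXt E ≠ 0 := (map_ne_zero_iff _ hinj).mpr hEne
    rw [hgoalden, hL2, hc₀, ← hc,
      show A * (E * Cp) = E * (A * Cp) by ring,
      map_mul, map_mul, RatFunc.algebraMap_C,
      mul_div_mul_left _ _ hEm]
end
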